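/- The Tate module T_p(K̄*/q^Z) = lim← (K̄*/q^Z)[p^n] is a free Z_p-module of rank 2, with basis given by the compatible systems (ε_n) and (q_n mod q^Z). -/

import Mathlib

/-- An (additive, real-valued) valuation on a field `K`, with `v 0 = ⊤`. -/
structure AddVal (K : Type*) [Field K] where
  v : K → WithTop ℝ
  v_top : ∀ x, v x = ⊤ ↔ x = 0
  v_one : v 1 = 0
  v_neg : ∀ x, v (-x) = v x
  v_mul : ∀ x y, v (x * y) = v x + v y
  v_add : ∀ x y, min (v x) (v y) ≤ v (x + y)

namespace AddVal

variable {K : Type*} [Field K] (w : AddVal K)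

/-- The additive subgroup `{x : K | v x ≥ c}`. -/
def ball (c : ℝ) : AddSubgroup K where
  carrier := {x | (c : WithTop ℝ) ≤ w.v x}
  zero_mem' := by simp [(w.v_top 0).mpr rfl]
  add_mem' := fun hx hy => le_trans (le_min hx hy) (w.v_add _ _)
  neg_mem' := fun hx => by simpa [w.v_neg] using hx

/-- The valuation ring `{x : K | v x ≥ 0}`. -/
def integers : Subring K where
  carrier := {x | (0 : WithTop ℝ) ≤ w.v x}
  zero_mem' := by simp [(w.v_top 0).mpr rfl]
  one_mem' := by simp [w.v_one]
  add_mem' := fun hx hy => le_trans (le_min hx hy) (w.v_add _ _)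
  neg_mem' := fun hx => by simpa [w.v_neg] using hx
  mul_mem' := fun hx hy => by
    simp only [Set.mem_setOf_eq, w.v_mul] at *
    exact add_nonneg hx hy

/-- The fractional ideal `{x : K | v x ≥ c}` as a module over the valuation ring. -/
def fracIdl (c : ℝ) : Submodule w.integers K where
  carrier := {x | (c : WithTop ℝ) ≤ w.v x}
  zero_mem' := by simp [(w.v_top 0).mpr rfl]
  add_mem' := fun hx hy => le_trans (le_min hx hy) (w.v_add _ _)
  smul_mem' := fun o x hx => by
    have ho : (0 : WithTop ℝ) ≤ w.v (o : K) := o.2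
    have : ((o : K) * x) = o • x := rfl
    simp only [Set.mem_setOf_eq, ← this, w.v_mul]
    simpa using add_le_add ho hx

end AddVal

/-- The `p`-adic Tate module of an abelian group `M`, realized as the group of
sequences `(x_n)` with `p^n • x_n = 0` and `p • x_{n+1} = x_n` (that is,
`lim← M[p^n]` along the multiplication-by-`p` maps). -/
def TateModule (p : ℕ) (M : Type*) [AddCommGroup M] : AddSubgroup (∀ _ : ℕ, M) where
  carrier := {x | (∀ n, p ^ n • x n = 0) ∧ ∀ n, p • x (n + 1) = x n}
  zero_mem' := ⟨fun _ => smul_zero _, fun _ => smul_zero _⟩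
  add_mem' := fun hx hy =>
    ⟨fun n => by simp [smul_add, hx.1 n, hy.1 n],
     fun n => by simp [smul_add, hx.2 n, hy.2 n]⟩
  neg_mem' := fun hx =>
    ⟨fun n => by simp [hx.1 n], fun n => by simp [hx.2 n]⟩

/-- The map on Tate modules induced by a homomorphism of abelian groups. -/
def TateMap (p : ℕ) {M N : Type*} [AddCommGroup M] [AddCommGroup N] (f : M →+ N) :
    TateModule p M →+ TateModule p N where
  toFun x := ⟨fun n => f (x.1 n),
    ⟨fun n => by rw [← map_nsmul, x.2.1 n, map_zero],
     fun n => by rw [← map_nsmul, x.2.2 n]⟩⟩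
  map_zero' := Subtype.ext (funext fun n => by simp)
  map_add' x y := Subtype.ext (funext fun n => by simp)

namespace Tate16

variable {p : ℕ} [hp : Fact p.Prime] {L : Type*} [Field L]

/-- Real-valued valuation of a unit. -/
noncomputable def vv (w : AddVal L) (u : Lˣ) : ℝ := WithTop.untopD 0 (w.v u)

theorem vv_spec (w : AddVal L) (u : Lˣ) : w.v (u : L) = ((vv w u : ℝ) : WithTop ℝ) := by
  have h : w.v (u : L) ≠ ⊤ := by simpa [w.v_top] using u.ne_zero
  obtain ⟨r, hr⟩ := WithTop.ne_top_iff_exists.mp h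
  rw [vv, ← hr, WithTop.untopD_coe]

theorem vv_one (w : AddVal L) : vv w 1 = 0 := by
  have h := vv_spec w 1
  rw [Units.val_one, w.v_one] at h
  exact_mod_cast h.symm

theorem vv_mul (w : AddVal L) (u v : Lˣ) : vv w (u * v) = vv w u + vv w v := by
  have h := vv_spec w (u * v)
  rw [Units.val_mul, w.v_mul, vv_spec w u, vv_spec w v, ← WithTop.coe_add] at h
  exact_mod_cast h.symm

/-- `vv` as a monoid hom. -/
noncomputable def vvHom (w : AddVal L) : Lˣ →* Multiplicative ℝ where
  toFun u := Multiplicative.ofAdd (vv w u)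
  map_one' := by rw [vv_one]; rfl
  map_mul' u v := by rw [vv_mul]; rfl

theorem vv_zpow (w : AddVal L) (u : Lˣ) (k : ℤ) : vv w (u ^ k) = k * vv w u := by
  have h := congrArg Multiplicative.toAdd (map_zpow (vvHom w) u k)
  simpa [vvHom, toAdd_zpow, zsmul_eq_mul] using h

theorem vv_pow (w : AddVal L) (u : Lˣ) (k : ℕ) : vv w (u ^ k) = k * vv w u := by
  have h := congrArg Multiplicative.toAdd (map_pow (vvHom w) u k)
  simpa [vvHom, toAdd_pow, nsmul_eq_mul] using h

/-! ### `p`-adic limits of compatible integer sequences -/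

theorem zdvd_of_cast_eq {n : ℕ} {a b : ℤ}
    (h : ((a : ℤ) : ZMod (p ^ n)) = ((b : ℤ) : ZMod (p ^ n))) :
    (p : ℤ) ^ n ∣ a - b := by
  have h1 := (ZMod.intCast_eq_intCast_iff a b (p ^ n)).mp h
  have h2 := h1.symm.dvd
  simpa [Nat.cast_pow] using h2

/-- The `n`-th digit approximation of a `p`-adic integer, as an integer. -/
noncomputable def A (p : ℕ) [Fact p.Prime] (x : ℤ_[p]) (n : ℕ) : ℤ :=
  ((PadicInt.toZModPow n x).val : ℤ)

theorem A_cast (x : ℤ_[p]) (n : ℕ) :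
    ((A p x n : ℤ) : ZMod (p ^ n)) = PadicInt.toZModPow n x := by
  haveI : NeZero (p ^ n) := ⟨pow_ne_zero n hp.out.ne_zero⟩
  rw [A]
  push_cast
  rw [ZMod.natCast_val, ZMod.cast_id]

theorem A_succ_cast (x : ℤ_[p]) (n : ℕ) :
    ((A p x (n + 1) : ℤ) : ZMod (p ^ n)) = PadicInt.toZModPow n x := by
  haveI : NeZero (p ^ (n + 1)) := ⟨pow_ne_zero _ hp.out.ne_zero⟩
  rw [A]
  push_cast
  rw [ZMod.natCast_val]
  exact PadicInt.cast_toZModPow n (n + 1) (Nat.le_succ n) x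

theorem A_sub_dvd {x : ℤ_[p]} {c : ℤ} {n : ℕ}
    (h : PadicInt.toZModPow n x = ((c : ℤ) : ZMod (p ^ n))) :
    (p : ℤ) ^ n ∣ A p x n - c :=
  zdvd_of_cast_eq (by rw [A_cast, h])

theorem A_succ_dvd (x : ℤ_[p]) (n : ℕ) :
    (p : ℤ) ^ n ∣ A p x (n + 1) - A p x n :=
  zdvd_of_cast_eq (by rw [A_cast, A_succ_cast])

theorem A_add_dvd (x y : ℤ_[p]) (n : ℕ) :
    (p : ℤ) ^ n ∣ A p (x + y) n - (A p x n + A p y n) :=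
  zdvd_of_cast_eq (by rw [Int.cast_add, A_cast, A_cast, A_cast, map_add])

theorem A_one_dvd (n : ℕ) : (p : ℤ) ^ n ∣ A p 1 n - 1 :=
  zdvd_of_cast_eq (by rw [A_cast, map_one, Int.cast_one])

theorem A_zero_dvd (n : ℕ) : (p : ℤ) ^ n ∣ A p 0 n - 0 :=
  zdvd_of_cast_eq (by rw [A_cast, map_zero, Int.cast_zero])

theorem limEx (g : ℕ → ℤ) (hg : ∀ n, (p : ℤ) ^ n ∣ g (n + 1) - g n) :
    ∃ a : ℤ_[p], ∀ n, PadicInt.toZModPow n a = ((g n : ℤ) : ZMod (p ^ n)) := by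
  have hstep : ∀ n m, n ≤ m → (p : ℤ) ^ n ∣ g m - g n := by
    intro n m hnm
    induction m, hnm using Nat.le_induction with
    | base => simp
    | succ m hm ih =>
      have h1 : (p : ℤ) ^ n ∣ g (m + 1) - g m :=
        dvd_trans (pow_dvd_pow _ hm) (hg m)
      simpa using dvd_add h1 ih
  have hnorm : ∀ n m, n ≤ m →
      ‖((g m : ℤ_[p]) - (g n : ℤ_[p]))‖ ≤ (p : ℝ) ^ (-(n : ℤ)) := by
    intro n m hnm
    have hcast : ((g m : ℤ_[p]) - (g n : ℤ_[p])) = (((g m - g n : ℤ)) : ℤ_[p]) := by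
      push_cast; ring
    rw [hcast, PadicInt.norm_le_pow_iff_mem_span_pow, Ideal.mem_span_singleton,
      PadicInt.pow_p_dvd_int_iff]
    simpa [Nat.cast_pow] using hstep n m hnm
  have hc : IsCauSeq norm (fun n => ((g n : ℤ) : ℤ_[p])) := by
    intro e he
    obtain ⟨N, hN⟩ : ∃ N : ℕ, (p : ℝ) ^ (-(N : ℤ)) < e := by
      have hp1 : (1 : ℝ) < (p : ℝ) := by exact_mod_cast hp.out.one_lt
      have hinv : ((p : ℝ))⁻¹ < 1 := by
        rw [inv_lt_one₀ (by linarith)]; exact hp1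
      obtain ⟨N, hN⟩ := exists_pow_lt_of_lt_one he hinv
      refine ⟨N, ?_⟩
      rw [zpow_neg, zpow_natCast]
      simpa [inv_pow] using hN
    exact ⟨N, fun m hm => lt_of_le_of_lt (hnorm N m hm) hN⟩
  let s : CauSeq ℤ_[p] norm := ⟨_, hc⟩
  refine ⟨s.lim, fun n => ?_⟩
  have hlim : ‖s.lim - ((g n : ℤ) : ℤ_[p])‖ ≤ (p : ℝ) ^ (-(n : ℤ)) := by
    have hpos : (0 : ℝ) < (p : ℝ) ^ (-(n : ℤ)) :=
      zpow_pos (by exact_mod_cast hp.out.pos) _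
    obtain ⟨i, hi⟩ := (CauSeq.equiv_lim s) _ hpos
    have h1 := hi (max i n) (le_max_left _ _)
    have h2 := hnorm n (max i n) (le_max_right _ _)
    have hsplit : s.lim - ((g n : ℤ) : ℤ_[p]) =
        (s.lim - ((g (max i n) : ℤ) : ℤ_[p])) +
          (((g (max i n) : ℤ) : ℤ_[p]) - ((g n : ℤ) : ℤ_[p])) := by ring
    rw [hsplit]
    refine le_trans (PadicInt.nonarchimedean _ _) (max_le ?_ h2)
    have h3 : ‖s.lim - ((g (max i n) : ℤ) : ℤ_[p])‖ < (p : ℝ) ^ (-(n : ℤ)) := by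
      rw [norm_sub_rev]
      exact h1
    exact h3.le
  have hker : PadicInt.toZModPow n (s.lim - ((g n : ℤ) : ℤ_[p])) = 0 := by
    have hmem := (PadicInt.norm_le_pow_iff_mem_span_pow _ n).mp hlim
    rw [← PadicInt.ker_toZModPow, RingHom.mem_ker] at hmem
    exact hmem
  have h4 : PadicInt.toZModPow n s.lim = PadicInt.toZModPow n ((g n : ℤ) : ℤ_[p]) := by
    rwa [map_sub, sub_eq_zero] at hker
  rw [h4, map_intCast]

end Tate16
namespace Tate16

variable {p : ℕ} [hp : Fact p.Prime] {L : Type*} [Field L]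

theorem qs_pow (qu : Lˣ) (qs : ℕ → Lˣ) (hq0 : qs 0 = qu)
    (hqs : ∀ n, qs (n + 1) ^ p = qs n) (n : ℕ) : qs n ^ (p ^ n) = qu := by
  induction n with
  | zero => simpa using hq0
  | succ n ih => rw [pow_succ', pow_mul, hqs n]; exact ih

theorem eps_pow (ε : ℕ → Lˣ) (hε : ∀ n, IsPrimitiveRoot ((ε n : L)) (p ^ n)) (n : ℕ) :
    ε n ^ (p ^ n) = 1 :=
  Units.ext (by rw [Units.val_pow_eq_pow_val, Units.val_one]; exact (hε n).pow_eq_one)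

theorem key (w : AddVal L) (qu : Lˣ) (hq : (0 : WithTop ℝ) < w.v (qu : L))
    (ε : ℕ → Lˣ) (hε : ∀ n, IsPrimitiveRoot ((ε n : L)) (p ^ n))
    (qs : ℕ → Lˣ) (hq0 : qs 0 = qu) (hqs : ∀ n, qs (n + 1) ^ p = qs n)
    (n : ℕ) (a b : ℤ) :
    ε n ^ a * qs n ^ b ∈ Subgroup.zpowers qu ↔ (p : ℤ) ^ n ∣ a ∧ (p : ℤ) ^ n ∣ b := by
  have hvq : 0 < vv w qu := by
    rw [vv_spec] at hq; exact_mod_cast hq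
  have hqsn : qs n ^ ((p : ℤ) ^ n) = qu := by
    rw [← Nat.cast_pow, zpow_natCast]
    exact qs_pow qu qs hq0 hqs n
  have hεn : ε n ^ ((p : ℤ) ^ n) = 1 := by
    rw [← Nat.cast_pow, zpow_natCast]
    exact eps_pow ε hε n
  have hvε : vv w (ε n) = 0 := by
    have h := congrArg (vv w) (eps_pow ε hε n)
    rw [vv_pow, vv_one] at h
    have hpn : ((p ^ n : ℕ) : ℝ) ≠ 0 := by
      exact_mod_cast pow_ne_zero n hp.out.ne_zero
    exact (mul_eq_zero.mp h).resolve_left hpn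
  have hvqs : (p : ℝ) ^ n * vv w (qs n) = vv w qu := by
    have h := congrArg (vv w) (qs_pow qu qs hq0 hqs n)
    rw [vv_pow] at h
    push_cast at h
    exact h
  constructor
  · intro hmem
    obtain ⟨k, hk⟩ := Subgroup.mem_zpowers_iff.mp hmem
    have hv := congrArg (vv w) hk
    rw [vv_zpow, vv_mul, vv_zpow, vv_zpow, hvε, mul_zero, zero_add] at hv
    -- hv : k * vv qu = b * vv (qs n)
    have h2 : ((p : ℝ) ^ n * (k : ℝ)) * vv w qu = (b : ℝ) * vv w qu := by
      rw [mul_assoc, hv, ← mul_assoc, mul_comm ((p:ℝ)^n) (b:ℝ), mul_assoc, hvqs]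
    have hb' := mul_right_cancel₀ (ne_of_gt hvq) h2
    have hbk : b = (p : ℤ) ^ n * k := by exact_mod_cast hb'.symm
    have hqs_b : qs n ^ b = qu ^ k := by
      rw [hbk, zpow_mul, hqsn]
    rw [hqs_b] at hk
    have hεa : ε n ^ a = 1 := mul_eq_right.mp hk.symm
    have hdvda : (p : ℤ) ^ n ∣ a := by
      have hu := IsPrimitiveRoot.coe_units_iff.mp (hε n)
      have h3 := (hu.zpow_eq_one_iff_dvd a).mp hεa
      simpa [Nat.cast_pow] using h3
    exact ⟨hdvda, hbk ▸ dvd_mul_right _ _⟩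
  · rintro ⟨⟨a', rfl⟩, ⟨b', rfl⟩⟩
    rw [zpow_mul, zpow_mul, hεn, hqsn, one_zpow, one_mul]
    exact Subgroup.zpow_mem _ (Subgroup.mem_zpowers qu) b'

theorem keyQ (w : AddVal L) (qu : Lˣ) (hq : (0 : WithTop ℝ) < w.v (qu : L))
    (ε : ℕ → Lˣ) (hε : ∀ n, IsPrimitiveRoot ((ε n : L)) (p ^ n))
    (qs : ℕ → Lˣ) (hq0 : qs 0 = qu) (hqs : ∀ n, qs (n + 1) ^ p = qs n)
    (n : ℕ) (a b : ℤ) :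
    ((ε n : Lˣ ⧸ Subgroup.zpowers qu)) ^ a * ((qs n : Lˣ ⧸ Subgroup.zpowers qu)) ^ b = 1 ↔
      (p : ℤ) ^ n ∣ a ∧ (p : ℤ) ^ n ∣ b := by
  rw [← QuotientGroup.mk_zpow, ← QuotientGroup.mk_zpow, ← QuotientGroup.mk_mul,
    QuotientGroup.eq_one_iff]
  exact key w qu hq ε hε qs hq0 hqs n a b

theorem mulQ (qu : Lˣ) (ε qs : ℕ → Lˣ) (n : ℕ) (a₁ b₁ a₂ b₂ : ℤ) :
    (((ε n : Lˣ ⧸ Subgroup.zpowers qu)) ^ a₁ * ((qs n : Lˣ ⧸ Subgroup.zpowers qu)) ^ b₁) *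
      (((ε n : Lˣ ⧸ Subgroup.zpowers qu)) ^ a₂ * ((qs n : Lˣ ⧸ Subgroup.zpowers qu)) ^ b₂) =
      ((ε n : Lˣ ⧸ Subgroup.zpowers qu)) ^ (a₁ + a₂) *
        ((qs n : Lˣ ⧸ Subgroup.zpowers qu)) ^ (b₁ + b₂) := by
  rw [← QuotientGroup.mk_zpow, ← QuotientGroup.mk_zpow, ← QuotientGroup.mk_zpow,
    ← QuotientGroup.mk_zpow, ← QuotientGroup.mk_zpow, ← QuotientGroup.mk_zpow,
    ← QuotientGroup.mk_mul, ← QuotientGroup.mk_mul, ← QuotientGroup.mk_mul]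
  exact congrArg _ (by rw [zpow_add, zpow_add, mul_mul_mul_comm])

theorem eqQ_iff (w : AddVal L) (qu : Lˣ) (hq : (0 : WithTop ℝ) < w.v (qu : L))
    (ε : ℕ → Lˣ) (hε : ∀ n, IsPrimitiveRoot ((ε n : L)) (p ^ n))
    (qs : ℕ → Lˣ) (hq0 : qs 0 = qu) (hqs : ∀ n, qs (n + 1) ^ p = qs n)
    (n : ℕ) (a a' b b' : ℤ) :
    ((ε n : Lˣ ⧸ Subgroup.zpowers qu)) ^ a * ((qs n : Lˣ ⧸ Subgroup.zpowers qu)) ^ b =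
      ((ε n : Lˣ ⧸ Subgroup.zpowers qu)) ^ a' * ((qs n : Lˣ ⧸ Subgroup.zpowers qu)) ^ b' ↔
      ((p : ℤ) ^ n ∣ a - a' ∧ (p : ℤ) ^ n ∣ b - b') := by
  have hsplit := mulQ qu ε qs n (a - a') (b - b') a' b'
  rw [Int.sub_add_cancel, Int.sub_add_cancel] at hsplit
  constructor
  · intro h
    have h2 : (((ε n : Lˣ ⧸ Subgroup.zpowers qu)) ^ (a - a') *
        ((qs n : Lˣ ⧸ Subgroup.zpowers qu)) ^ (b - b')) *
        (((ε n : Lˣ ⧸ Subgroup.zpowers qu)) ^ a' *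
          ((qs n : Lˣ ⧸ Subgroup.zpowers qu)) ^ b') =
        ((ε n : Lˣ ⧸ Subgroup.zpowers qu)) ^ a' *
          ((qs n : Lˣ ⧸ Subgroup.zpowers qu)) ^ b' := by
      rw [hsplit, h]
    exact (keyQ w qu hq ε hε qs hq0 hqs n _ _).mp (by
      have h3 := congrArg (· * (((ε n : Lˣ ⧸ Subgroup.zpowers qu)) ^ a' *
        ((qs n : Lˣ ⧸ Subgroup.zpowers qu)) ^ b')⁻¹) h2
      simpa only [mul_inv_cancel_right, mul_inv_cancel] using h3)
  · intro h
    rw [← hsplit, (keyQ w qu hq ε hε qs hq0 hqs n _ _).mpr h]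
    exact one_mul (((ε n : Lˣ ⧸ Subgroup.zpowers qu)) ^ a' * ((qs n : Lˣ ⧸ Subgroup.zpowers qu)) ^ b')

theorem pow_pn_eq_one (w : AddVal L) (qu : Lˣ) (hq : (0 : WithTop ℝ) < w.v (qu : L))
    (ε : ℕ → Lˣ) (hε : ∀ n, IsPrimitiveRoot ((ε n : L)) (p ^ n))
    (qs : ℕ → Lˣ) (hq0 : qs 0 = qu) (hqs : ∀ n, qs (n + 1) ^ p = qs n)
    (n : ℕ) (a b : ℤ) :
    (((ε n : Lˣ ⧸ Subgroup.zpowers qu)) ^ a * ((qs n : Lˣ ⧸ Subgroup.zpowers qu)) ^ b)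
      ^ (p ^ n) = 1 := by
  rw [← QuotientGroup.mk_zpow, ← QuotientGroup.mk_zpow, ← QuotientGroup.mk_mul,
    ← QuotientGroup.mk_pow, QuotientGroup.eq_one_iff]
  rw [← zpow_natCast, mul_zpow, ← zpow_mul, ← zpow_mul]
  exact (key w qu hq ε hε qs hq0 hqs n _ _).mpr
    ⟨⟨a, by push_cast; ring⟩, ⟨b, by push_cast; ring⟩⟩

theorem pow_p_eq (qu : Lˣ) (ε : ℕ → Lˣ) (hεc : ∀ n, ε (n + 1) ^ p = ε n)
    (qs : ℕ → Lˣ) (hqs : ∀ n, qs (n + 1) ^ p = qs n)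
    (n : ℕ) (a b : ℤ) :
    (((ε (n + 1) : Lˣ ⧸ Subgroup.zpowers qu)) ^ a *
        ((qs (n + 1) : Lˣ ⧸ Subgroup.zpowers qu)) ^ b) ^ p =
      ((ε n : Lˣ ⧸ Subgroup.zpowers qu)) ^ a * ((qs n : Lˣ ⧸ Subgroup.zpowers qu)) ^ b := by
  rw [← QuotientGroup.mk_zpow, ← QuotientGroup.mk_zpow, ← QuotientGroup.mk_zpow,
    ← QuotientGroup.mk_zpow, ← QuotientGroup.mk_mul, ← QuotientGroup.mk_mul,
    ← QuotientGroup.mk_pow]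
  apply congrArg
  rw [mul_pow, ← hεc n, ← hqs n,
    ← zpow_natCast ((ε (n + 1)) ^ a), ← zpow_natCast ((qs (n + 1)) ^ b),
    ← zpow_mul, ← zpow_mul, mul_comm a, mul_comm b, zpow_mul, zpow_mul,
    zpow_natCast, zpow_natCast]

theorem tors (w : AddVal L) (qu : Lˣ) (hq : (0 : WithTop ℝ) < w.v (qu : L))
    (ε : ℕ → Lˣ) (hε : ∀ n, IsPrimitiveRoot ((ε n : L)) (p ^ n))
    (qs : ℕ → Lˣ) (hq0 : qs 0 = qu) (hqs : ∀ n, qs (n + 1) ^ p = qs n)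
    (n : ℕ) (y : Lˣ ⧸ Subgroup.zpowers qu) (hy : y ^ (p ^ n) = 1) :
    ∃ a b : ℤ, y = ((ε n : Lˣ ⧸ Subgroup.zpowers qu)) ^ a *
      ((qs n : Lˣ ⧸ Subgroup.zpowers qu)) ^ b := by
  haveI : NeZero (p ^ n) := ⟨pow_ne_zero n hp.out.ne_zero⟩
  obtain ⟨u, rfl⟩ := QuotientGroup.mk_surjective y
  have hu : (u ^ (p ^ n) : Lˣ) ∈ Subgroup.zpowers qu := by
    rw [← QuotientGroup.eq_one_iff, QuotientGroup.mk_pow]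
    exact hy
  obtain ⟨m, hm⟩ := Subgroup.mem_zpowers_iff.mp hu
  -- hm : qu ^ m = u ^ p ^ n
  set u' : Lˣ := u * qs n ^ (-m) with hu'
  have h1 : u' ^ (p ^ n) = 1 := by
    have h1' : u' ^ ((p ^ n : ℕ) : ℤ) = 1 := by
      rw [hu', mul_zpow, zpow_natCast u, ← hm, ← zpow_mul, mul_comm (-m), zpow_mul,
        zpow_natCast, qs_pow qu qs hq0 hqs n, ← zpow_add, add_neg_cancel, zpow_zero]
    rwa [zpow_natCast] at h1'
  have h2 : ((u' : L)) ^ (p ^ n) = 1 := by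
    rw [← Units.val_pow_eq_pow_val, h1, Units.val_one]
  obtain ⟨i, _, hi⟩ := (hε n).eq_pow_of_pow_eq_one h2
  have hi' : ε n ^ i = u' := Units.ext (by rw [Units.val_pow_eq_pow_val]; exact hi)
  refine ⟨(i : ℤ), m, ?_⟩
  have hu2 : u = ε n ^ (i : ℤ) * qs n ^ m := by
    calc u = u * (qs n ^ (-m) * qs n ^ m) := by
          rw [← zpow_add, neg_add_cancel, zpow_zero, mul_one]
      _ = u' * qs n ^ m := by rw [← mul_assoc, hu']
      _ = ε n ^ (i : ℤ) * qs n ^ m := by rw [← hi', zpow_natCast]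
  rw [hu2, QuotientGroup.mk_mul, QuotientGroup.mk_zpow, QuotientGroup.mk_zpow]

end Tate16
namespace Tate16

variable {p : ℕ} [hp : Fact p.Prime] {L : Type*} [Field L]

/-- The candidate basis map `ℤ_p × ℤ_p → T_p(Lˣ/q^ℤ)`, componentwise. -/
noncomputable def phiFun (p : ℕ) [Fact p.Prime] {L : Type*} [Field L] (qu : Lˣ)
    (ε qs : ℕ → Lˣ) (x : ℤ_[p] × ℤ_[p]) : ℕ → Additive (Lˣ ⧸ Subgroup.zpowers qu) :=
  fun n => Additive.ofMul (((ε n : Lˣ ⧸ Subgroup.zpowers qu)) ^ (A p x.1 n) *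
    ((qs n : Lˣ ⧸ Subgroup.zpowers qu)) ^ (A p x.2 n))

theorem phiFun_mem (w : AddVal L) (qu : Lˣ) (hq : (0 : WithTop ℝ) < w.v (qu : L))
    (ε : ℕ → Lˣ) (hε : ∀ n, IsPrimitiveRoot ((ε n : L)) (p ^ n))
    (hεc : ∀ n, ε (n + 1) ^ p = ε n)
    (qs : ℕ → Lˣ) (hq0 : qs 0 = qu) (hqs : ∀ n, qs (n + 1) ^ p = qs n)
    (x : ℤ_[p] × ℤ_[p]) :
    phiFun p qu ε qs x ∈ TateModule p (Additive (Lˣ ⧸ Subgroup.zpowers qu)) := by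
  refine ⟨fun n => ?_, fun n => ?_⟩
  · have h0 := pow_pn_eq_one w qu hq ε hε qs hq0 hqs n (A p x.1 n) (A p x.2 n)
    exact (ofMul_pow _ _).symm.trans (congrArg Additive.ofMul h0)
  · have h0 := (pow_p_eq qu ε hεc qs hqs n (A p x.1 (n + 1)) (A p x.2 (n + 1))).trans
      ((eqQ_iff w qu hq ε hε qs hq0 hqs n _ _ _ _).mpr
        ⟨A_succ_dvd x.1 n, A_succ_dvd x.2 n⟩)
    exact (ofMul_pow _ _).symm.trans (congrArg Additive.ofMul h0)

theorem phiFun_add (w : AddVal L) (qu : Lˣ) (hq : (0 : WithTop ℝ) < w.v (qu : L))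
    (ε : ℕ → Lˣ) (hε : ∀ n, IsPrimitiveRoot ((ε n : L)) (p ^ n))
    (qs : ℕ → Lˣ) (hq0 : qs 0 = qu) (hqs : ∀ n, qs (n + 1) ^ p = qs n)
    (x y : ℤ_[p] × ℤ_[p]) :
    phiFun p qu ε qs (x + y) = phiFun p qu ε qs x + phiFun p qu ε qs y := by
  funext n
  have h0 := ((eqQ_iff w qu hq ε hε qs hq0 hqs n (A p (x.1 + y.1) n)
      (A p x.1 n + A p y.1 n) (A p (x.2 + y.2) n) (A p x.2 n + A p y.2 n)).mpr
      ⟨A_add_dvd x.1 y.1 n, A_add_dvd x.2 y.2 n⟩).trans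
    (mulQ qu ε qs n (A p x.1 n) (A p x.2 n) (A p y.1 n) (A p y.2 n)).symm
  exact congrArg Additive.ofMul h0

theorem phiFun_inj (w : AddVal L) (qu : Lˣ) (hq : (0 : WithTop ℝ) < w.v (qu : L))
    (ε : ℕ → Lˣ) (hε : ∀ n, IsPrimitiveRoot ((ε n : L)) (p ^ n))
    (qs : ℕ → Lˣ) (hq0 : qs 0 = qu) (hqs : ∀ n, qs (n + 1) ^ p = qs n)
    (x : ℤ_[p] × ℤ_[p]) (h : ∀ n, phiFun p qu ε qs x n = 0) : x = 0 := by
  have hd : ∀ n, (p : ℤ) ^ n ∣ A p x.1 n ∧ (p : ℤ) ^ n ∣ A p x.2 n := by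
    intro n
    have h1 : ((ε n : Lˣ ⧸ Subgroup.zpowers qu)) ^ (A p x.1 n) *
        ((qs n : Lˣ ⧸ Subgroup.zpowers qu)) ^ (A p x.2 n) = 1 :=
      congrArg Additive.toMul (h n)
    exact (keyQ w qu hq ε hε qs hq0 hqs n _ _).mp h1
  have hz : ∀ (z : ℤ_[p]), (∀ n, (p : ℤ) ^ n ∣ A p z n) → z = 0 := by
    intro z hzn
    refine PadicInt.ext_of_toZModPow.mp fun n => ?_
    rw [map_zero, ← A_cast]
    exact (ZMod.intCast_zmod_eq_zero_iff_dvd _ _).mpr (by simpa [Nat.cast_pow] using hzn n)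
  have h1 := hz x.1 fun n => (hd n).1
  have h2 := hz x.2 fun n => (hd n).2
  exact Prod.ext h1 h2

theorem phiFun_surj (w : AddVal L) (qu : Lˣ) (hq : (0 : WithTop ℝ) < w.v (qu : L))
    (ε : ℕ → Lˣ) (hε : ∀ n, IsPrimitiveRoot ((ε n : L)) (p ^ n))
    (hεc : ∀ n, ε (n + 1) ^ p = ε n)
    (qs : ℕ → Lˣ) (hq0 : qs 0 = qu) (hqs : ∀ n, qs (n + 1) ^ p = qs n)
    (f : ℕ → Additive (Lˣ ⧸ Subgroup.zpowers qu))
    (hf : f ∈ TateModule p (Additive (Lˣ ⧸ Subgroup.zpowers qu))) :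
    ∃ x : ℤ_[p] × ℤ_[p], phiFun p qu ε qs x = f := by
  have hy1 : ∀ n, (Additive.toMul (f n)) ^ (p ^ n) = 1 := fun n =>
    congrArg Additive.toMul (hf.1 n)
  have hy2 : ∀ n, (Additive.toMul (f (n + 1))) ^ p = Additive.toMul (f n) := fun n =>
    congrArg Additive.toMul (hf.2 n)
  choose aa bb hab using fun n => tors w qu hq ε hε qs hq0 hqs n _ (hy1 n)
  have hcmp : ∀ n, (p : ℤ) ^ n ∣ aa (n + 1) - aa n ∧ (p : ℤ) ^ n ∣ bb (n + 1) - bb n := by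
    intro n
    have h3 : ((ε n : Lˣ ⧸ Subgroup.zpowers qu)) ^ (aa (n + 1)) *
        ((qs n : Lˣ ⧸ Subgroup.zpowers qu)) ^ (bb (n + 1)) =
        ((ε n : Lˣ ⧸ Subgroup.zpowers qu)) ^ (aa n) *
          ((qs n : Lˣ ⧸ Subgroup.zpowers qu)) ^ (bb n) := by
      rw [← pow_p_eq qu ε hεc qs hqs n (aa (n + 1)) (bb (n + 1)), ← hab (n + 1),
        hy2 n, hab n]
    exact (eqQ_iff w qu hq ε hε qs hq0 hqs n _ _ _ _).mp h3
  obtain ⟨a, ha⟩ := limEx aa fun n => (hcmp n).1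
  obtain ⟨b, hb⟩ := limEx bb fun n => (hcmp n).2
  refine ⟨(a, b), funext fun n => ?_⟩
  have h4 : ((ε n : Lˣ ⧸ Subgroup.zpowers qu)) ^ (A p a n) *
      ((qs n : Lˣ ⧸ Subgroup.zpowers qu)) ^ (A p b n) = Additive.toMul (f n) := by
    rw [hab n]
    exact (eqQ_iff w qu hq ε hε qs hq0 hqs n _ _ _ _).mpr
      ⟨A_sub_dvd (ha n), A_sub_dvd (hb n)⟩
  exact congrArg Additive.ofMul h4

end Tate16
/-- The Tate module `T_p(K̄^*/q^ℤ) = lim← (K̄^*/q^ℤ)[p^n]` of the Tate curve is free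
of rank `2` over `ℤ_p`, with basis given by the compatible systems `(ε_n)` (primitive
`p^n`-th roots of unity) and `(q_n mod q^ℤ)` (compatible `p^n`-th roots of `q`):
there is an isomorphism onto `ℤ_p × ℤ_p` sending these two elements to the standard
basis. -/
theorem stmt16 (p : ℕ) [Fact p.Prime] {L : Type*} [Field L] [IsAlgClosed L]
    (w : AddVal L) (qu : Lˣ) (hq : (0 : WithTop ℝ) < w.v (qu : L))
    (ε : ℕ → Lˣ) (hε : ∀ n, IsPrimitiveRoot ((ε n : L)) (p ^ n))
    (hεc : ∀ n, ε (n + 1) ^ p = ε n)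
    (qs : ℕ → Lˣ) (hq0 : qs 0 = qu) (hqs : ∀ n, qs (n + 1) ^ p = qs n) :
    ∃ (h1 : (fun n => Additive.ofMul ((ε n : Lˣ ⧸ Subgroup.zpowers qu)))
        ∈ TateModule p (Additive (Lˣ ⧸ Subgroup.zpowers qu)))
      (h2 : (fun n => Additive.ofMul ((qs n : Lˣ ⧸ Subgroup.zpowers qu)))
        ∈ TateModule p (Additive (Lˣ ⧸ Subgroup.zpowers qu)))
      (e : TateModule p (Additive (Lˣ ⧸ Subgroup.zpowers qu)) ≃+ ℤ_[p] × ℤ_[p]),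
      e ⟨_, h1⟩ = (1, 0) ∧ e ⟨_, h2⟩ = (0, 1) := by
  classical
  have heq := fun (n : ℕ) (a a' b b' : ℤ) => Tate16.eqQ_iff w qu hq ε hε qs hq0 hqs n a a' b b'
  -- the two basis elements lie in the Tate module
  have h1 : (fun n => Additive.ofMul ((ε n : Lˣ ⧸ Subgroup.zpowers qu)))
      ∈ TateModule p (Additive (Lˣ ⧸ Subgroup.zpowers qu)) := by
    refine ⟨fun n => ?_, fun n => ?_⟩
    · have h0 : ((ε n : Lˣ ⧸ Subgroup.zpowers qu)) ^ (p ^ n) = 1 := by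
        rw [← QuotientGroup.mk_pow, Tate16.eps_pow ε hε n, QuotientGroup.mk_one]
      exact (ofMul_pow _ _).symm.trans (congrArg Additive.ofMul h0)
    · have h0 : ((ε (n + 1) : Lˣ ⧸ Subgroup.zpowers qu)) ^ p
          = (ε n : Lˣ ⧸ Subgroup.zpowers qu) := by
        rw [← QuotientGroup.mk_pow, hεc n]
      exact (ofMul_pow _ _).symm.trans (congrArg Additive.ofMul h0)
  have h2 : (fun n => Additive.ofMul ((qs n : Lˣ ⧸ Subgroup.zpowers qu)))
      ∈ TateModule p (Additive (Lˣ ⧸ Subgroup.zpowers qu)) := by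
    refine ⟨fun n => ?_, fun n => ?_⟩
    · have h0 : ((qs n : Lˣ ⧸ Subgroup.zpowers qu)) ^ (p ^ n) = 1 := by
        rw [← QuotientGroup.mk_pow, Tate16.qs_pow qu qs hq0 hqs n,
          QuotientGroup.eq_one_iff]
        exact Subgroup.mem_zpowers qu
      exact (ofMul_pow _ _).symm.trans (congrArg Additive.ofMul h0)
    · have h0 : ((qs (n + 1) : Lˣ ⧸ Subgroup.zpowers qu)) ^ p
          = (qs n : Lˣ ⧸ Subgroup.zpowers qu) := by
        rw [← QuotientGroup.mk_pow, hqs n]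
      exact (ofMul_pow _ _).symm.trans (congrArg Additive.ofMul h0)
  -- the homomorphism ℤ_p × ℤ_p →+ Tate module
  let φ : ℤ_[p] × ℤ_[p] →+ TateModule p (Additive (Lˣ ⧸ Subgroup.zpowers qu)) :=
    AddMonoidHom.mk'
      (fun x => ⟨Tate16.phiFun p qu ε qs x,
        Tate16.phiFun_mem w qu hq ε hε hεc qs hq0 hqs x⟩)
      (fun x y => Subtype.ext (Tate16.phiFun_add w qu hq ε hε qs hq0 hqs x y))
  have hbij : Function.Bijective φ := by
    constructor
    · rw [injective_iff_map_eq_zero]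
      intro x hx
      have hx' : ∀ n, Tate16.phiFun p qu ε qs x n = 0 := fun n =>
        congrFun (congrArg Subtype.val hx) n
      exact Tate16.phiFun_inj w qu hq ε hε qs hq0 hqs x hx'
    · rintro ⟨f, hf⟩
      obtain ⟨x, hx⟩ := Tate16.phiFun_surj w qu hq ε hε hεc qs hq0 hqs f hf
      exact ⟨x, Subtype.ext hx⟩
  refine ⟨h1, h2, (AddEquiv.ofBijective φ hbij).symm, ?_, ?_⟩
  · have hφ1 : φ (1, 0) = (⟨_, h1⟩ :
        TateModule p (Additive (Lˣ ⧸ Subgroup.zpowers qu))) := by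
      apply Subtype.ext
      funext n
      have h0 : ((ε n : Lˣ ⧸ Subgroup.zpowers qu)) ^ (Tate16.A p (1 : ℤ_[p]) n) *
          ((qs n : Lˣ ⧸ Subgroup.zpowers qu)) ^ (Tate16.A p (0 : ℤ_[p]) n) =
          (ε n : Lˣ ⧸ Subgroup.zpowers qu) := by
        calc ((ε n : Lˣ ⧸ Subgroup.zpowers qu)) ^ (Tate16.A p (1 : ℤ_[p]) n) *
            ((qs n : Lˣ ⧸ Subgroup.zpowers qu)) ^ (Tate16.A p (0 : ℤ_[p]) n)
            = ((ε n : Lˣ ⧸ Subgroup.zpowers qu)) ^ (1 : ℤ) *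
              ((qs n : Lˣ ⧸ Subgroup.zpowers qu)) ^ (0 : ℤ) :=
              (heq n _ 1 _ 0).mpr ⟨Tate16.A_one_dvd n, Tate16.A_zero_dvd n⟩
          _ = ((ε n : Lˣ ⧸ Subgroup.zpowers qu)) * 1 := by rw [zpow_one, zpow_zero]
          _ = (ε n : Lˣ ⧸ Subgroup.zpowers qu) :=
              mul_one ((ε n : Lˣ ⧸ Subgroup.zpowers qu))
      exact congrArg Additive.ofMul h0
    rw [← hφ1]
    exact (AddEquiv.ofBijective φ hbij).symm_apply_apply (1, 0)
  · have hφ2 : φ (0, 1) = (⟨_, h2⟩ :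
        TateModule p (Additive (Lˣ ⧸ Subgroup.zpowers qu))) := by
      apply Subtype.ext
      funext n
      have h0 : ((ε n : Lˣ ⧸ Subgroup.zpowers qu)) ^ (Tate16.A p (0 : ℤ_[p]) n) *
          ((qs n : Lˣ ⧸ Subgroup.zpowers qu)) ^ (Tate16.A p (1 : ℤ_[p]) n) =
          (qs n : Lˣ ⧸ Subgroup.zpowers qu) := by
        calc ((ε n : Lˣ ⧸ Subgroup.zpowers qu)) ^ (Tate16.A p (0 : ℤ_[p]) n) *
            ((qs n : Lˣ ⧸ Subgroup.zpowers qu)) ^ (Tate16.A p (1 : ℤ_[p]) n)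
            = ((ε n : Lˣ ⧸ Subgroup.zpowers qu)) ^ (0 : ℤ) *
              ((qs n : Lˣ ⧸ Subgroup.zpowers qu)) ^ (1 : ℤ) :=
              (heq n _ 0 _ 1).mpr ⟨Tate16.A_zero_dvd n, Tate16.A_one_dvd n⟩
          _ = 1 * ((qs n : Lˣ ⧸ Subgroup.zpowers qu)) := by rw [zpow_one, zpow_zero]
          _ = (qs n : Lˣ ⧸ Subgroup.zpowers qu) :=
              one_mul ((qs n : Lˣ ⧸ Subgroup.zpowers qu))
      exact congrArg Additive.ofMul h0
    rw [← hφ2]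
    exact (AddEquiv.ofBijective φ hbij).symm_apply_apply (0, 1)
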